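/- Let K be a compact subgroup of GL_n(ℝ) and let M ∈ M_n(ℝ) with M ∉ K (so that the orbit K·M = {kM : k ∈ K} is disjoint from K). Then there exists a polynomial function P : M_n(ℝ) → ℝ (a real polynomial in the n² matrix entries) such that P(kX) = P(X) for all k ∈ K and X ∈ M_n(ℝ), P vanishes identically on K, and P(M) ≠ 0. -/

import Mathlib

open MeasureTheory MvPolynomial

namespace InvSep

variable {n : ℕ}

/-- The linear substitution polynomials representing `X ↦ a * X`. -/
noncomputable def subL (n : ℕ) (a : Matrix (Fin n) (Fin n) ℝ) (q : Fin n × Fin n) :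
    MvPolynomial (Fin n × Fin n) ℝ :=
  ∑ l, C (a q.1 l) * X (l, q.2)

lemma aeval_eq_eval (f : Fin n × Fin n → ℝ) (p : MvPolynomial (Fin n × Fin n) ℝ) :
    aeval f p = eval f p := by
  rw [aeval_def, ← eval₂_id]
  simp

lemma eval_subL (a x : Matrix (Fin n) (Fin n) ℝ) (q : Fin n × Fin n) :
    eval (fun q : Fin n × Fin n => x q.1 q.2) (subL n a q) = (a * x) q.1 q.2 := by
  simp [subL, Matrix.mul_apply]

lemma eval_bind (a x : Matrix (Fin n) (Fin n) ℝ) (p : MvPolynomial (Fin n × Fin n) ℝ) :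
    eval (fun q : Fin n × Fin n => x q.1 q.2) (bind₁ (subL n a) p)
      = eval (fun q : Fin n × Fin n => (a * x) q.1 q.2) p := by
  have h := aeval_bind₁ (R := ℝ) (S := ℝ)
    (fun q : Fin n × Fin n => x q.1 q.2) (subL n a) p
  simp only [aeval_eq_eval] at h
  rw [h]
  have hfun : (fun i : Fin n × Fin n => eval (fun q : Fin n × Fin n => x q.1 q.2) (subL n a i))
      = fun q : Fin n × Fin n => (a * x) q.1 q.2 := funext (eval_subL a x)
  rw [hfun]

lemma continuous_coeff (p : MvPolynomial (Fin n × Fin n) ℝ) :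
    ∀ m : (Fin n × Fin n) →₀ ℕ,
      Continuous fun a : Matrix (Fin n) (Fin n) ℝ => coeff m (bind₁ (subL n a) p) := by
  classical
  induction p using MvPolynomial.induction_on with
  | C c => intro m; simpa [bind₁_C_right] using (continuous_const :
      Continuous fun _ : Matrix (Fin n) (Fin n) ℝ => coeff m (C c : MvPolynomial (Fin n × Fin n) ℝ))
  | add p q hp hq =>
    intro m
    simp only [map_add, coeff_add]
    exact (hp m).add (hq m)
  | mul_X p i hp =>
    intro m
    have key : ∀ a : Matrix (Fin n) (Fin n) ℝ,
        coeff m (bind₁ (subL n a) (p * X i)) =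
        ∑ x ∈ Finset.HasAntidiagonal.antidiagonal m,
          coeff x.1 (bind₁ (subL n a) p) * coeff x.2 (subL n a i) := by
      intro a; rw [map_mul, bind₁_X_right, coeff_mul]
    simp only [key]
    refine continuous_finset_sum _ fun x _ => (hp x.1).mul ?_
    have h2 : ∀ a : Matrix (Fin n) (Fin n) ℝ, coeff x.2 (subL n a i)
        = ∑ l, a i.1 l * coeff x.2 (X (l, i.2) : MvPolynomial (Fin n × Fin n) ℝ) := by
      intro a
      simp [subL, coeff_sum, coeff_C_mul]
    simp only [h2]
    exact continuous_finset_sum _ fun l _ =>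
      (Continuous.mul (f := fun a : Matrix (Fin n) (Fin n) ℝ => a i.1 l)
        ((continuous_apply l).comp (continuous_apply i.1)) continuous_const)

lemma totalDegree_bind_le (a : Matrix (Fin n) (Fin n) ℝ) (p : MvPolynomial (Fin n × Fin n) ℝ) :
    (bind₁ (subL n a) p).totalDegree ≤ p.totalDegree := by
  classical
  have hsub : ∀ q, (subL n a q).totalDegree ≤ 1 := by
    intro q
    refine totalDegree_finsetSum_le fun l _ => ?_
    refine (totalDegree_mul _ _).trans ?_
    simp [totalDegree_C, totalDegree_X]
  have hrepr : bind₁ (subL n a) p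
      = ∑ v ∈ p.support, C (coeff v p) * ∏ i ∈ v.support, (subL n a i) ^ (v i) := by
    conv_lhs => rw [p.as_sum]
    rw [map_sum]
    refine Finset.sum_congr rfl fun v _ => ?_
    rw [bind₁_monomial]
  rw [hrepr]
  refine totalDegree_finsetSum_le fun v hv => ?_
  refine (totalDegree_mul _ _).trans ?_
  rw [totalDegree_C, zero_add]
  refine (totalDegree_finset_prod _ _).trans ?_
  calc ∑ i ∈ v.support, ((subL n a i) ^ (v i)).totalDegree
      ≤ ∑ i ∈ v.support, v i := by
        refine Finset.sum_le_sum fun i _ => ?_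
        refine (totalDegree_pow _ _).trans ?_
        calc v i * (subL n a i).totalDegree ≤ v i * 1 :=
              Nat.mul_le_mul_left _ (hsub i)
          _ = v i := Nat.mul_one _
    _ ≤ p.totalDegree := by
        have := le_totalDegree (p := p) hv
        simpa [Finsupp.sum] using this

/-- All exponent vectors with every entry at most `d`. -/
noncomputable def expSet (n d : ℕ) : Finset ((Fin n × Fin n) →₀ ℕ) :=
  (Finset.univ : Finset (Fin n × Fin n → Fin (d + 1))).image
    (fun f => Finsupp.equivFunOnFinite.symm fun q => (f q : ℕ))

lemma mem_expSet {n d : ℕ} {m : (Fin n × Fin n) →₀ ℕ} (h : ∀ q, m q ≤ d) :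
    m ∈ expSet n d := by
  classical
  refine Finset.mem_image.2 ⟨fun q => ⟨m q, Nat.lt_succ_of_le (h q)⟩, Finset.mem_univ _, ?_⟩
  ext q
  simp [Finsupp.equivFunOnFinite]

lemma support_bind_subset (a : Matrix (Fin n) (Fin n) ℝ) (p : MvPolynomial (Fin n × Fin n) ℝ) :
    (bind₁ (subL n a) p).support ⊆ expSet n p.totalDegree := by
  classical
  intro m hm
  refine mem_expSet fun q => ?_
  have h1 : m q ≤ m.sum fun _ e => e := by
    by_cases h : m q = 0
    · simp [h]
    · simpa [Finsupp.sum] using Finset.single_le_sum (f := fun i => m i)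
        (fun _ _ => Nat.zero_le _) (Finsupp.mem_support_iff.mpr h)
  exact h1.trans ((le_totalDegree hm).trans (totalDegree_bind_le a p))

lemma eval_eq_sum_of_support_subset {D : Finset ((Fin n × Fin n) →₀ ℕ)}
    (y : Fin n × Fin n → ℝ) {q : MvPolynomial (Fin n × Fin n) ℝ}
    (h : q.support ⊆ D) :
    eval y q = ∑ m ∈ D, coeff m q * ∏ s ∈ m.support, y s ^ m s := by
  rw [eval_eq]
  refine Finset.sum_subset h fun m _ hm => ?_
  simp [MvPolynomial.notMem_support_iff.mp hm]

end InvSep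

open MeasureTheory MvPolynomial InvSep Topology TopologicalSpace

theorem invariant_separating_polynomial
    (n : ℕ) (K : Subgroup (GL (Fin n) ℝ))
    (hcomp : IsCompact
      ((fun g : GL (Fin n) ℝ => (g : Matrix (Fin n) (Fin n) ℝ)) '' (K : Set (GL (Fin n) ℝ))))
    (M : Matrix (Fin n) (Fin n) ℝ)
    (hM : M ∉ (fun g : GL (Fin n) ℝ => (g : Matrix (Fin n) (Fin n) ℝ)) ''
      (K : Set (GL (Fin n) ℝ))) :
    ∃ P : MvPolynomial (Fin n × Fin n) ℝ,
      (∀ k ∈ K, ∀ X : Matrix (Fin n) (Fin n) ℝ,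
        MvPolynomial.eval
          (fun p : Fin n × Fin n => ((k : Matrix (Fin n) (Fin n) ℝ) * X) p.1 p.2) P =
        MvPolynomial.eval (fun p : Fin n × Fin n => X p.1 p.2) P) ∧
      (∀ k ∈ K,
        MvPolynomial.eval
          (fun p : Fin n × Fin n => (k : Matrix (Fin n) (Fin n) ℝ) p.1 p.2) P = 0) ∧
      MvPolynomial.eval (fun p : Fin n × Fin n => M p.1 p.2) P ≠ 0 := by
  classical
  letI : MetricSpace (Matrix (Fin n) (Fin n) ℝ) :=
    inferInstanceAs (MetricSpace (Fin n → Fin n → ℝ))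
  set S : Set (Matrix (Fin n) (Fin n) ℝ) :=
    (fun g : GL (Fin n) ℝ => (g : Matrix (Fin n) (Fin n) ℝ)) '' (K : Set (GL (Fin n) ℝ)) with hSdef
  -- `val : GL → Matrix` is an embedding
  have hembed : Topology.IsEmbedding (Units.val : GL (Fin n) ℝ → Matrix (Fin n) (Fin n) ℝ) := by
    refine Units.isEmbedding_val_mk' ?_ fun u => (Matrix.coe_units_inv u).symm
    intro A hA
    have hdet : A.det ≠ 0 := ((Matrix.isUnit_iff_isUnit_det A).mp hA).ne_zero
    refine (continuousAt_matrix_inv A ?_).continuousWithinAt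
    rw [show (Ring.inverse : ℝ → ℝ) = Inv.inv from Ring.inverse_eq_inv']
    exact continuousAt_inv₀ hdet
  have hKc : IsCompact (K : Set (GL (Fin n) ℝ)) := hembed.isCompact_iff.mpr hcomp
  haveI : CompactSpace ↥K := isCompact_iff_compactSpace.mp hKc
  borelize ↥K
  -- Haar probability measure on K
  let K₀ : PositiveCompacts ↥K :=
    ⟨⟨Set.univ, isCompact_univ⟩, by rw [interior_univ]; exact ⟨1, trivial⟩⟩
  let μ : Measure ↥K := Measure.haarMeasure K₀
  haveI hprob : IsProbabilityMeasure μ := ⟨Measure.haarMeasure_self⟩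
  haveI : LocallyCompactSpace ↥K := inferInstance
  haveI hrinv : μ.IsMulRightInvariant := by
    constructor
    intro g
    haveI : IsProbabilityMeasure (Measure.map (· * g) μ) :=
      Measure.isProbabilityMeasure_map (continuous_mul_right g).aemeasurable
    exact Measure.isHaarMeasure_eq_of_isProbabilityMeasure _ μ
  -- the compact sets S and S·M
  have hone : (1 : Matrix (Fin n) (Fin n) ℝ) ∈ S := ⟨1, K.one_mem, rfl⟩
  set SM : Set (Matrix (Fin n) (Fin n) ℝ) := (fun A => A * M) '' S with hSMdef
  have hSMc : IsCompact SM := hcomp.image (continuous_id.matrix_mul continuous_const)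
  have hMSM : M ∈ SM := ⟨1, hone, one_mul M⟩
  have hdisj : ∀ A ∈ SM, A ∉ S := by
    rintro _ ⟨_, ⟨k, hk, rfl⟩, rfl⟩ ⟨k', hk', hEq⟩
    apply hM
    refine ⟨k⁻¹ * k', K.mul_mem (K.inv_mem hk) hk', ?_⟩
    show ((k⁻¹ * k' : GL (Fin n) ℝ) : Matrix (Fin n) (Fin n) ℝ) = M
    have h1 : ((k⁻¹ : GL (Fin n) ℝ) : Matrix (Fin n) (Fin n) ℝ) * (k : Matrix (Fin n) (Fin n) ℝ)
        = 1 := by rw [← Units.val_mul, inv_mul_cancel, Units.val_one]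
    calc ((k⁻¹ * k' : GL (Fin n) ℝ) : Matrix (Fin n) (Fin n) ℝ)
        = ((k⁻¹ : GL (Fin n) ℝ) : Matrix (Fin n) (Fin n) ℝ) * (k' : Matrix (Fin n) (Fin n) ℝ) :=
          Units.val_mul _ _
      _ = ((k⁻¹ : GL (Fin n) ℝ) : Matrix (Fin n) (Fin n) ℝ)
            * ((k : Matrix (Fin n) (Fin n) ℝ) * M) := by
          rw [show ((k' : GL (Fin n) ℝ) : Matrix (Fin n) (Fin n) ℝ)
            = (k : Matrix (Fin n) (Fin n) ℝ) * M from hEq]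
      _ = M := by rw [← Matrix.mul_assoc, h1, Matrix.one_mul]
  -- separation distance
  have hSne : S.Nonempty := ⟨1, hone⟩
  obtain ⟨A₀, hA₀, hmin⟩ := hSMc.exists_isMinOn ⟨M, hMSM⟩
    ((Metric.continuous_infDist_pt S).continuousOn)
  set δ : ℝ := Metric.infDist A₀ S with hδdef
  have hδpos : 0 < δ := by
    rw [hδdef, ← hcomp.isClosed.notMem_iff_infDist_pos hSne]
    exact hdisj A₀ hA₀
  have hδle : ∀ A ∈ SM, δ ≤ Metric.infDist A S := fun A hA => hmin hA
  -- Stone–Weierstrass on the compact set S ∪ SM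
  set Cset : Set (Matrix (Fin n) (Fin n) ℝ) := S ∪ SM with hCdef
  have hCc : IsCompact Cset := hcomp.union hSMc
  haveI : CompactSpace ↥Cset := isCompact_iff_compactSpace.mp hCc
  let coords : (Fin n × Fin n) → C(↥Cset, ℝ) := fun q =>
    ⟨fun x => (x : Matrix (Fin n) (Fin n) ℝ) q.1 q.2,
      (continuous_apply q.2).comp ((continuous_apply q.1).comp continuous_subtype_val)⟩
  let Ψ : MvPolynomial (Fin n × Fin n) ℝ →ₐ[ℝ] C(↥Cset, ℝ) := aeval coords
  have hΨval : ∀ (p : MvPolynomial (Fin n × Fin n) ℝ) (x : ↥Cset),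
      Ψ p x = eval (fun q : Fin n × Fin n => (x : Matrix (Fin n) (Fin n) ℝ) q.1 q.2) p := by
    intro p x
    have h1 : (ContinuousMap.evalAlgHom ℝ ℝ x).comp Ψ
        = aeval fun q : Fin n × Fin n => coords q x := comp_aeval coords _
    have h2 := AlgHom.congr_fun h1 p
    change (Ψ p) x = _ at h2
    rw [InvSep.aeval_eq_eval] at h2
    exact h2
  have hsep : (Ψ.range).SeparatesPoints := by
    intro x y hxy
    have hentry : ∃ q : Fin n × Fin n,
        (x : Matrix (Fin n) (Fin n) ℝ) q.1 q.2 ≠ (y : Matrix (Fin n) (Fin n) ℝ) q.1 q.2 := by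
      by_contra h
      push_neg at h
      exact hxy (Subtype.ext (Matrix.ext fun i j => h (i, j)))
    obtain ⟨q, hq⟩ := hentry
    refine ⟨⇑(Ψ (MvPolynomial.X q)), ⟨Ψ (MvPolynomial.X q), ⟨MvPolynomial.X q, rfl⟩, rfl⟩, ?_⟩
    simpa [hΨval, eval_X] using hq
  obtain ⟨g, hg⟩ := ContinuousMap.exists_mem_subalgebra_near_continuous_of_separatesPoints
    Ψ.range hsep (fun x : ↥Cset => Metric.infDist (x : Matrix (Fin n) (Fin n) ℝ) S)
    ((Metric.continuous_infDist_pt S).comp continuous_subtype_val) (δ / 4) (by positivity)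
  have hg2 : (g : C(↥Cset, ℝ)) ∈ Ψ.range := g.2
  obtain ⟨p, hp⟩ := (AlgHom.mem_range Ψ).mp hg2
  -- bounds for `p` on S and SM
  have hpS : ∀ A ∈ S, |eval (fun q : Fin n × Fin n => A q.1 q.2) p| ≤ δ / 4 := by
    intro A hA
    have hx : A ∈ Cset := Or.inl hA
    have := hg ⟨A, hx⟩
    rw [show ((g : C(↥Cset, ℝ)) : ↥Cset → ℝ) ⟨A, hx⟩
        = eval (fun q : Fin n × Fin n => A q.1 q.2) p from by rw [← hp]; exact hΨval p ⟨A, hx⟩,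
      Metric.infDist_zero_of_mem hA, sub_zero] at this
    exact le_of_lt (by simpa [Real.norm_eq_abs] using this)
  have hpSM : ∀ A ∈ SM, δ - δ / 4 ≤ eval (fun q : Fin n × Fin n => A q.1 q.2) p := by
    intro A hA
    have hx : A ∈ Cset := Or.inr hA
    have h3 := hg ⟨A, hx⟩
    rw [show ((g : C(↥Cset, ℝ)) : ↥Cset → ℝ) ⟨A, hx⟩
        = eval (fun q : Fin n × Fin n => A q.1 q.2) p from by rw [← hp]; exact hΨval p ⟨A, hx⟩,
      Real.norm_eq_abs, abs_sub_lt_iff] at h3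
    have := h3.2
    have h4 := hδle A hA
    linarith
  -- averaging over the Haar measure
  let ρ : ↥K → Matrix (Fin n) (Fin n) ℝ :=
    fun k => ((k : GL (Fin n) ℝ) : Matrix (Fin n) (Fin n) ℝ)
  have hρcont : Continuous ρ := Units.continuous_val.comp continuous_subtype_val
  have hρmem : ∀ k : ↥K, ρ k ∈ S := fun k => ⟨k, k.2, rfl⟩
  set D : Finset ((Fin n × Fin n) →₀ ℕ) := expSet n p.totalDegree with hD
  set cf : ((Fin n × Fin n) →₀ ℕ) → ↥K → ℝ :=
    fun m k => coeff m (bind₁ (subL n (ρ k)) p) with hcf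
  have hcfc : ∀ m, Continuous (cf m) := fun m => (continuous_coeff p m).comp hρcont
  have hcfi : ∀ m, Integrable (cf m) μ := by
    intro m
    refine (hcfc m).integrable_of_hasCompactSupport ?_
    exact IsCompact.of_isClosed_subset isCompact_univ (isClosed_tsupport _) (Set.subset_univ _)
  set P0 : MvPolynomial (Fin n × Fin n) ℝ :=
    ∑ m ∈ D, monomial m (∫ k, cf m k ∂μ) with hP0
  have hP0eval : ∀ Y : Matrix (Fin n) (Fin n) ℝ,
      eval (fun q : Fin n × Fin n => Y q.1 q.2) P0
        = ∫ k, eval (fun q : Fin n × Fin n => (ρ k * Y) q.1 q.2) p ∂μ := by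
    intro Y
    have hterm : ∀ m ∈ D,
        eval (fun q : Fin n × Fin n => Y q.1 q.2) (monomial m (∫ k, cf m k ∂μ))
          = ∫ k, cf m k * ∏ s ∈ m.support, Y s.1 s.2 ^ m s ∂μ := by
      intro m _
      rw [eval_monomial, ← integral_mul_const]
      simp [Finsupp.prod]
    rw [hP0, map_sum, Finset.sum_congr rfl hterm,
      ← integral_finset_sum _ (fun m _ => (hcfi m).mul_const _)]
    refine integral_congr_ae (Filter.Eventually.of_forall fun k => ?_)
    show (∑ m ∈ D, cf m k * ∏ s ∈ m.support, Y s.1 s.2 ^ m s)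
        = eval (fun q : Fin n × Fin n => (ρ k * Y) q.1 q.2) p
    rw [← eval_bind (ρ k) Y p]
    exact (eval_eq_sum_of_support_subset _ (support_bind_subset (ρ k) p)).symm
  have hP0inv : ∀ k ∈ K, ∀ Xm : Matrix (Fin n) (Fin n) ℝ,
      eval (fun q : Fin n × Fin n => ((k : Matrix (Fin n) (Fin n) ℝ) * Xm) q.1 q.2) P0
        = eval (fun q : Fin n × Fin n => Xm q.1 q.2) P0 := by
    intro k hk Xm
    rw [hP0eval, hP0eval]
    have hfun : (fun κ : ↥K => eval (fun q : Fin n × Fin n =>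
          (ρ κ * ((k : Matrix (Fin n) (Fin n) ℝ) * Xm)) q.1 q.2) p)
        = fun κ : ↥K => eval (fun q : Fin n × Fin n => (ρ (κ * ⟨k, hk⟩) * Xm) q.1 q.2) p := by
      funext κ
      have hval : (fun q : Fin n × Fin n => (ρ κ * ((k : Matrix (Fin n) (Fin n) ℝ) * Xm)) q.1 q.2)
          = fun q : Fin n × Fin n => (ρ (κ * ⟨k, hk⟩) * Xm) q.1 q.2 := by
        funext q
        rw [show ρ (κ * ⟨k, hk⟩) = ρ κ * (k : Matrix (Fin n) (Fin n) ℝ) from rfl,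
          Matrix.mul_assoc]
      rw [hval]
    rw [hfun]
    exact integral_mul_right_eq_self (μ := μ)
      (fun κ : ↥K => eval (fun q : Fin n × Fin n => (ρ κ * Xm) q.1 q.2) p) ⟨k, hk⟩
  set c : ℝ := eval (fun q : Fin n × Fin n => (1 : Matrix (Fin n) (Fin n) ℝ) q.1 q.2) P0 with hc
  have hvanish : ∀ k ∈ K,
      eval (fun q : Fin n × Fin n => (k : Matrix (Fin n) (Fin n) ℝ) q.1 q.2) P0 = c := by
    intro k hk
    have h5 := hP0inv k hk 1
    rw [Matrix.mul_one] at h5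
    exact h5
  have hcbound : |c| ≤ δ / 4 := by
    have h1 : c = ∫ κ : ↥K, eval (fun q : Fin n × Fin n => (ρ κ) q.1 q.2) p ∂μ := by
      rw [hc, hP0eval]
      simp [Matrix.mul_one]
    rw [h1, ← Real.norm_eq_abs]
    have h2 := norm_integral_le_of_norm_le_const (μ := μ) (C := δ / 4)
      (f := fun κ : ↥K => eval (fun q : Fin n × Fin n => (ρ κ) q.1 q.2) p)
      (Filter.Eventually.of_forall fun κ : ↥K => by
        simpa [Real.norm_eq_abs] using hpS (ρ κ) (hρmem κ))
    simpa [measure_univ] using h2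
  have hMbound : δ - δ / 4 ≤ eval (fun q : Fin n × Fin n => M q.1 q.2) P0 := by
    rw [hP0eval]
    have hint : Integrable
        (fun κ : ↥K => eval (fun q : Fin n × Fin n => (ρ κ * M) q.1 q.2) p) μ := by
      refine Continuous.integrable_of_hasCompactSupport ?_ ?_
      · exact (MvPolynomial.continuous_eval p).comp (continuous_pi fun q =>
          (continuous_apply q.2).comp ((continuous_apply q.1).comp
            (hρcont.matrix_mul continuous_const)))
      · exact IsCompact.of_isClosed_subset isCompact_univ (isClosed_tsupport _) (Set.subset_univ _)
    have hconst : ∫ _κ : ↥K, (δ - δ / 4) ∂μ = δ - δ / 4 := by simp [measure_univ]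
    rw [← hconst]
    exact integral_mono (integrable_const _) hint fun κ =>
      hpSM (ρ κ * M) ⟨ρ κ, hρmem κ, rfl⟩
  refine ⟨P0 - MvPolynomial.C c, ?_, ?_, ?_⟩
  · intro k hk Xm
    simp only [map_sub, eval_C]
    rw [hP0inv k hk Xm]
  · intro k hk
    simp only [map_sub, eval_C]
    rw [hvanish k hk, sub_self]
  · simp only [map_sub, eval_C]
    have habs := (abs_le.mp hcbound).2
    have : 0 < eval (fun q : Fin n × Fin n => M q.1 q.2) P0 - c := by linarith
    exact ne_of_gt this
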